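/- There exists a 3-coloring of the positive integers with no monochromatic positive-integer solution to 2(x + y) = z; i.e., the equation 2x + 2y = z is not 3-regular. -/

import Mathlib

/-- The equation `2(x + y) = z` is not 3-regular. -/
theorem stmt_10 :
    ∃ χ : ℕ → Fin 3, ∀ x y z : ℕ, 0 < x → 0 < y → 0 < z →
      2 * (x + y) = z → ¬ (χ x = χ y ∧ χ y = χ z) := by
  refine ⟨fun n => ⟨Nat.log 2 n % 3, Nat.mod_lt _ (by norm_num)⟩, ?_⟩
  rintro x y z hx hy hz heq ⟨h1, h2⟩
  simp only [Fin.mk.injEq] at h1 h2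
  set a := Nat.log 2 x with ha
  set b := Nat.log 2 y with hb
  set c := Nat.log 2 z with hc
  have hxu : x < 2 ^ (a + 1) := Nat.lt_pow_succ_log_self (by norm_num) x
  have hyu : y < 2 ^ (b + 1) := Nat.lt_pow_succ_log_self (by norm_num) y
  have hxl : 2 ^ a ≤ x := Nat.pow_log_le_self 2 hx.ne'
  have hyl : 2 ^ b ≤ y := Nat.pow_log_le_self 2 hy.ne'
  have hzu : z < 2 ^ (max a b + 3) := by
    have h1 : 2 ^ (a + 1) ≤ 2 ^ (max a b + 1) :=
      Nat.pow_le_pow_right (by norm_num) (by omega)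
    have h2 : 2 ^ (b + 1) ≤ 2 ^ (max a b + 1) :=
      Nat.pow_le_pow_right (by norm_num) (by omega)
    have : z < 2 * (2 ^ (max a b + 1) + 2 ^ (max a b + 1)) := by omega
    calc z < 2 * (2 ^ (max a b + 1) + 2 ^ (max a b + 1)) := this
      _ = 2 ^ (max a b + 3) := by ring
  have hzl : 2 ^ (max a b + 1) ≤ z := by
    have h1 : 2 ^ max a b ≤ 2 ^ a ∨ 2 ^ max a b ≤ 2 ^ b := by
      rcases max_cases a b with ⟨h, _⟩ | ⟨h, _⟩ <;> simp [h]
    have : 2 ^ (max a b + 1) = 2 * 2 ^ max a b := by ring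
    omega
  have hc1 : c < max a b + 3 := (Nat.log_lt_iff_lt_pow (by norm_num) hz.ne').2 hzu
  have hc2 : max a b + 1 ≤ c := by
    rw [hc]
    exact (Nat.le_log_iff_pow_le (by norm_num) hz.ne').2 hzl
  omega
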